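/- In Ũ with B_i = F_i + E_{τi}K̃_i', assume τ is an involution of the Cartan matrix with c_{i,τi} = 0 whenever τi ≠ i. If i ≠ τi, j ∉ {i, τi}, and c_{ij} = −1, then the undeformed quantum Serre relation B_i²B_j − (v+v^{-1})B_iB_jB_i + B_jB_i² = 0 holds. -/

import Mathlib

noncomputable section

open scoped TensorProduct

/-- The base field `ℚ(v)`. -/
abbrev kk : Type := RatFunc ℚ

/-- The indeterminate `v`. -/
noncomputable def v : kk := RatFunc.X

/-- Quantum integer `[n] = (v^n - v^{-n})/(v - v^{-1})`. -/
noncomputable def qInt (n : ℕ) : kk := (v ^ (n : ℤ) - v ^ (-(n : ℤ))) / (v - v⁻¹)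

/-- Quantum factorial. -/
noncomputable def qFact : ℕ → kk
  | 0 => 1
  | n + 1 => qFact n * qInt (n + 1)

/-- Quantum binomial coefficient. -/
noncomputable def qBinom (m r : ℕ) : kk := qFact m / (qFact r * qFact (m - r))

/-- Generators of the quantum group `Ũ` with doubled Cartan part. -/
inductive Gen (I : Type) : Type
  | E : I → Gen I
  | F : I → Gen I
  | K : I → Gen I
  | K' : I → Gen I
  | Ki : I → Gen I
  | K'i : I → Gen I

variable {I : Type} [Fintype I] [DecidableEq I]

/-- Canonical generators inside the free algebra. -/
noncomputable def gg (x : Gen I) : FreeAlgebra kk (Gen I) := FreeAlgebra.ι kk x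

/-- Defining relations of `Ũ` attached to the symmetric GCM `c`. -/
inductive URel (c : I → I → ℤ) : FreeAlgebra kk (Gen I) → FreeAlgebra kk (Gen I) → Prop
  | KKi (i : I) : URel c (gg (Gen.K i) * gg (Gen.Ki i)) 1
  | KiK (i : I) : URel c (gg (Gen.Ki i) * gg (Gen.K i)) 1
  | K'K'i (i : I) : URel c (gg (Gen.K' i) * gg (Gen.K'i i)) 1
  | K'iK' (i : I) : URel c (gg (Gen.K'i i) * gg (Gen.K' i)) 1
  | KK (i j : I) : URel c (gg (Gen.K i) * gg (Gen.K j)) (gg (Gen.K j) * gg (Gen.K i))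
  | KKp (i j : I) : URel c (gg (Gen.K i) * gg (Gen.K' j)) (gg (Gen.K' j) * gg (Gen.K i))
  | KpKp (i j : I) : URel c (gg (Gen.K' i) * gg (Gen.K' j)) (gg (Gen.K' j) * gg (Gen.K' i))
  | EF (i j : I) : URel c (gg (Gen.E i) * gg (Gen.F j) - gg (Gen.F j) * gg (Gen.E i))
      (if i = j then ((v - v⁻¹)⁻¹) • (gg (Gen.K i) - gg (Gen.K' i)) else 0)
  | KE (i j : I) :
      URel c (gg (Gen.K i) * gg (Gen.E j)) ((v ^ (c i j)) • (gg (Gen.E j) * gg (Gen.K i)))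
  | KF (i j : I) :
      URel c (gg (Gen.K i) * gg (Gen.F j)) ((v ^ (-(c i j))) • (gg (Gen.F j) * gg (Gen.K i)))
  | KpE (i j : I) :
      URel c (gg (Gen.K' i) * gg (Gen.E j)) ((v ^ (-(c i j))) • (gg (Gen.E j) * gg (Gen.K' i)))
  | KpF (i j : I) :
      URel c (gg (Gen.K' i) * gg (Gen.F j)) ((v ^ (c i j)) • (gg (Gen.F j) * gg (Gen.K' i)))
  | serreE (i j : I) (hij : i ≠ j) :
      URel c (∑ r ∈ Finset.range ((1 - c i j).toNat + 1),
        ((-1 : kk) ^ r * qBinom (1 - c i j).toNat r) •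
          (gg (Gen.E i) ^ r * gg (Gen.E j) * gg (Gen.E i) ^ ((1 - c i j).toNat - r))) 0
  | serreF (i j : I) (hij : i ≠ j) :
      URel c (∑ r ∈ Finset.range ((1 - c i j).toNat + 1),
        ((-1 : kk) ^ r * qBinom (1 - c i j).toNat r) •
          (gg (Gen.F i) ^ r * gg (Gen.F j) * gg (Gen.F i) ^ ((1 - c i j).toNat - r))) 0

/-- The quantum group `Ũ` with doubled Cartan part, presented by generators and relations. -/
abbrev Utilde (c : I → I → ℤ) : Type := RingQuot (URel c)

noncomputable def UE (c : I → I → ℤ) (i : I) : Utilde c :=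
  RingQuot.mkAlgHom kk (URel c) (gg (Gen.E i))
noncomputable def UF (c : I → I → ℤ) (i : I) : Utilde c :=
  RingQuot.mkAlgHom kk (URel c) (gg (Gen.F i))
noncomputable def UK (c : I → I → ℤ) (i : I) : Utilde c :=
  RingQuot.mkAlgHom kk (URel c) (gg (Gen.K i))
noncomputable def UK' (c : I → I → ℤ) (i : I) : Utilde c :=
  RingQuot.mkAlgHom kk (URel c) (gg (Gen.K' i))
noncomputable def UKi (c : I → I → ℤ) (i : I) : Utilde c :=
  RingQuot.mkAlgHom kk (URel c) (gg (Gen.Ki i))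
noncomputable def UK'i (c : I → I → ℤ) (i : I) : Utilde c :=
  RingQuot.mkAlgHom kk (URel c) (gg (Gen.K'i i))

/-- `B_i = F_i + E_{τi} K̃_i'`. -/
noncomputable def iB (c : I → I → ℤ) (τ : I → I) (i : I) : Utilde c :=
  UF c i + UE c (τ i) * UK' c i

/-- `k̃_i = K̃_i K̃_{τi}'`. -/
noncomputable def ik (c : I → I → ℤ) (τ : I → I) (i : I) : Utilde c :=
  UK c i * UK' c (τ i)

/-- The inverse of `k̃_i`. -/
noncomputable def ikinv (c : I → I → ℤ) (τ : I → I) (i : I) : Utilde c :=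
  UKi c i * UK'i c (τ i)

/-- The `ı`quantum group `Ũ^ı`, the subalgebra of `Ũ` generated by the `B_i` and `k̃_i^{±1}`. -/
noncomputable def Uiota (c : I → I → ℤ) (τ : I → I) : Subalgebra kk (Utilde c) :=
  Algebra.adjoin kk (Set.range (iB c τ) ∪ Set.range (ik c τ) ∪ Set.range (ikinv c τ))


/-- auxiliary scalar lemmas -/
lemma hv_ne : (v : kk) ≠ 0 := RatFunc.X_ne_zero

lemma hvpoly (p : Polynomial ℚ) (hp : p ≠ 0) : algebraMap (Polynomial ℚ) (RatFunc ℚ) p ≠ 0 := by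
  intro h
  exact hp (RatFunc.algebraMap_injective ℚ (by simpa using h))

lemma hq2_ne : (v:kk) + v⁻¹ ≠ 0 := by
  intro h
  have h1 : (v:kk) * v + 1 = 0 := by
    have := congrArg (· * v) h
    simp only [add_mul, zero_mul, inv_mul_cancel₀ hv_ne] at this
    linear_combination this
  have h2 : algebraMap (Polynomial ℚ) (RatFunc ℚ) (Polynomial.X * Polynomial.X + 1) ≠ 0 :=
    hvpoly _ (by intro h; have := congrArg (Polynomial.coeff · 2) h; simp [Polynomial.coeff_one] at this)
  apply h2
  rw [map_add, map_mul, map_one, RatFunc.algebraMap_X]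
  exact h1

lemma hvv_ne : (v : kk) - v⁻¹ ≠ 0 := by
  intro h
  have h1 : (v:kk) * v - 1 = 0 := by
    have := congrArg (· * v) h
    simp only [sub_mul, zero_mul, inv_mul_cancel₀ hv_ne] at this
    linear_combination this
  have h3 : algebraMap (Polynomial ℚ) (RatFunc ℚ) (Polynomial.X ^ 2 - 1) ≠ 0 :=
    hvpoly _ (by
      intro h
      have := congrArg (Polynomial.coeff · 2) h
      simp [Polynomial.coeff_one] at this)
  apply h3
  rw [map_sub, map_pow, map_one, RatFunc.algebraMap_X]
  show (v:kk) ^ 2 - 1 = 0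
  linear_combination h1

lemma qInt1 : qInt 1 = 1 := by
  simp [qInt, div_self hvv_ne]

lemma qInt2 : qInt 2 = v + v⁻¹ := by
  rw [qInt, div_eq_iff hvv_ne]
  have h2 : ((2:ℕ):ℤ) = 2 := rfl
  rw [h2, zpow_two]
  rw [show (-2 : ℤ) = -1 + -1 by norm_num, zpow_add₀ hv_ne]
  simp [zpow_neg_one]
  ring

lemma qF1 : qFact 1 = 1 := by simp [qFact, qInt1]
lemma qF2 : qFact 2 = v + v⁻¹ := by simp [qFact, qInt1, qInt2]
lemma qB0 : qBinom 2 0 = 1 := by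
  rw [qBinom]; norm_num [qF2, qFact, qF1, qInt1, div_self (show qInt 2 ≠ 0 by rw [qInt2]; exact hq2_ne), qInt2, div_self hq2_ne]
lemma qB2 : qBinom 2 2 = 1 := by
  rw [qBinom]; norm_num [qF2, qFact, qF1, qInt1, div_self (show qInt 2 ≠ 0 by rw [qInt2]; exact hq2_ne)]
lemma qB1 : qBinom 2 1 = v + v⁻¹ := by
  rw [qBinom]; norm_num [qF2, qF1]

set_option maxHeartbeats 1000000 in
/-- In `Ũ`, with `τ` an involution of the Cartan matrix satisfying `c_{i,τi} = 0`
whenever `τi ≠ i`: if `i ≠ τi`, `j ∉ {i, τi}` and `c_{ij} = −1`, then the undeformed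
quantum Serre relation `B_i²B_j − (v+v^{-1})B_iB_jB_i + B_jB_i² = 0` holds. -/
theorem undeformed_serre (c : I → I → ℤ)
    (hsymm : ∀ i j, c i j = c j i) (hdiag : ∀ i, c i i = 2)
    (hoff : ∀ i j, i ≠ j → c i j ≤ 0)
    (τ : I → I) (hτ : ∀ i, τ (τ i) = i) (hcτ : ∀ i j, c (τ i) (τ j) = c i j)
    (hsplit : ∀ i, τ i ≠ i → c i (τ i) = 0)
    (i j : I) (hne : i ≠ τ i) (hji : j ≠ i) (hjτ : j ≠ τ i) (hij : c i j = -1) :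
    iB c τ i * iB c τ i * iB c τ j
      - (v + v⁻¹) • (iB c τ i * iB c τ j * iB c τ i)
      + iB c τ j * (iB c τ i * iB c τ i) = 0 := by
  classical
  -- index facts
  have hτine : τ i ≠ i := fun h => hne h.symm
  have hτij : τ i ≠ j := fun h => hjτ h.symm
  have hτji : τ j ≠ i := fun h => hjτ (by rw [← hτ j, h])
  have hτiτj : τ i ≠ τ j := fun h => hji (by rw [← hτ j, ← h, hτ])
  have hc0 : c i (τ i) = 0 := hsplit i hτine
  have hcd : c j (τ i) = c i (τ j) := by
    have h2 := hcτ i (τ j); rw [hτ] at h2; rw [hsymm]; exact h2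
  have hcji : c j i = -1 := by rw [← hsymm]; exact hij
  have hcEE : c (τ i) (τ j) = -1 := by rw [hcτ]; exact hij
  have rel : ∀ {a b : FreeAlgebra kk (Gen I)}, URel c a b →
      RingQuot.mkAlgHom kk (URel c) a = RingQuot.mkAlgHom kk (URel c) b :=
    fun h => RingQuot.mkAlgHom_rel kk h
  -- commutation lemmas
  have hKe : UK' c i * UE c (τ i) = UE c (τ i) * UK' c i := by
    have h := rel (URel.KpE i (τ i))
    simpa [UK', UE, gg, hc0] using h
  have hKx : UK' c i * UF c i = (v*v) • (UF c i * UK' c i) := by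
    have h := rel (URel.KpF i i)
    simpa [UK', UF, gg, hdiag, zpow_two, sq] using h
  have hKy : UK' c i * UF c j = v⁻¹ • (UF c j * UK' c i) := by
    have h := rel (URel.KpF i j)
    simpa [UK', UF, gg, hij] using h
  have hKf : UK' c i * UE c (τ j) = (v ^ (-(c i (τ j)))) • (UE c (τ j) * UK' c i) := by
    have h := rel (URel.KpE i (τ j))
    simpa [UK', UE, gg] using h
  have hLx : UK' c j * UF c i = v⁻¹ • (UF c i * UK' c j) := by
    have h := rel (URel.KpF j i)
    simpa [UK', UF, gg, hcji] using h
  have hLe : UK' c j * UE c (τ i) = (v ^ (-(c i (τ j)))) • (UE c (τ i) * UK' c j) := by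
    have h := rel (URel.KpE j (τ i))
    simpa [UK', UE, gg, hcd] using h
  have hLK : UK' c j * UK' c i = UK' c i * UK' c j := by
    have h := rel (URel.KpKp j i)
    simpa [UK', gg] using h
  have hex : UE c (τ i) * UF c i = UF c i * UE c (τ i) := by
    have h := rel (URel.EF (τ i) i)
    rw [if_neg hτine] at h
    simp only [map_sub, map_mul, map_zero, sub_eq_zero] at h
    simpa [UE, UF, gg] using h
  have hey : UE c (τ i) * UF c j = UF c j * UE c (τ i) := by
    have h := rel (URel.EF (τ i) j)
    rw [if_neg hτij] at h
    simp only [map_sub, map_mul, map_zero, sub_eq_zero] at h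
    simpa [UE, UF, gg] using h
  have hfx : UE c (τ j) * UF c i = UF c i * UE c (τ j) := by
    have h := rel (URel.EF (τ j) i)
    rw [if_neg hτji] at h
    simp only [map_sub, map_mul, map_zero, sub_eq_zero] at h
    simpa [UE, UF, gg] using h
  -- extension helpers
  have ext : ∀ {A B : Utilde c} {s : kk}, A*B = s•(B*A) → ∀ t, A*(B*t) = s•(B*(A*t)) := by
    intro A B s h t; rw [← mul_assoc, h, smul_mul_assoc, mul_assoc]
  have ext1 : ∀ {A B : Utilde c}, A*B = B*A → ∀ t, A*(B*t) = B*(A*t) := by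
    intro A B h t; rw [← mul_assoc, h, mul_assoc]
  -- Serre relations
  have hSF : UF c j * (UF c i * UF c i) - (v+v⁻¹) • (UF c i * (UF c j * UF c i))
      + UF c i * (UF c i * UF c j) = 0 := by
    have h := rel (URel.serreF i j hji.symm)
    rw [hij] at h
    simp only [show (1 - (-1:ℤ)).toNat = 2 from rfl, map_sum] at h
    rw [Finset.sum_range_succ, Finset.sum_range_succ, Finset.sum_range_one] at h
    simp only [map_add, map_smul, map_mul, map_neg, neg_neg, map_pow, map_zero, qB0, qB1, qB2,
      pow_zero, pow_one, pow_succ, one_mul, mul_one, one_smul, neg_smul, neg_one_mul,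
      Nat.sub_self, Nat.sub_zero] at h
    simpa [UF, mul_assoc, sub_eq_add_neg] using h
  have hSF' : UF c i * (UF c i * UF c j) = (v+v⁻¹) • (UF c i * (UF c j * UF c i))
      - UF c j * (UF c i * UF c i) := by
    have h2 : UF c i * (UF c i * UF c j) - ((v+v⁻¹) • (UF c i * (UF c j * UF c i))
        - UF c j * (UF c i * UF c i)) = UF c j * (UF c i * UF c i)
        - (v+v⁻¹) • (UF c i * (UF c j * UF c i)) + UF c i * (UF c i * UF c j) := by abel
    exact sub_eq_zero.mp (h2.trans hSF)
  have hSE : UE c (τ j) * (UE c (τ i) * UE c (τ i))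
      - (v+v⁻¹) • (UE c (τ i) * (UE c (τ j) * UE c (τ i)))
      + UE c (τ i) * (UE c (τ i) * UE c (τ j)) = 0 := by
    have h := rel (URel.serreE (τ i) (τ j) hτiτj)
    rw [hcEE] at h
    simp only [show (1 - (-1:ℤ)).toNat = 2 from rfl, map_sum] at h
    rw [Finset.sum_range_succ, Finset.sum_range_succ, Finset.sum_range_one] at h
    simp only [map_add, map_smul, map_mul, map_neg, neg_neg, map_pow, map_zero, qB0, qB1, qB2,
      pow_zero, pow_one, pow_succ, one_mul, mul_one, one_smul, neg_smul, neg_one_mul,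
      Nat.sub_self, Nat.sub_zero] at h
    simpa [UE, mul_assoc, sub_eq_add_neg] using h
  have hSEM := congrArg (· * (UK' c i * (UK' c i * UK' c j))) hSE
  simp only [sub_mul, add_mul, smul_mul_assoc, zero_mul, mul_assoc] at hSEM
  have hSE' : UE c (τ i) * (UE c (τ i) * (UE c (τ j) * (UK' c i * (UK' c i * UK' c j))))
      = (v+v⁻¹) • (UE c (τ i) * (UE c (τ j) * (UE c (τ i) * (UK' c i * (UK' c i * UK' c j)))))
      - UE c (τ j) * (UE c (τ i) * (UE c (τ i) * (UK' c i * (UK' c i * UK' c j)))) := by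
    have h2 : UE c (τ i) * (UE c (τ i) * (UE c (τ j) * (UK' c i * (UK' c i * UK' c j))))
        - ((v+v⁻¹) • (UE c (τ i) * (UE c (τ j) * (UE c (τ i) * (UK' c i * (UK' c i * UK' c j)))))
        - UE c (τ j) * (UE c (τ i) * (UE c (τ i) * (UK' c i * (UK' c i * UK' c j)))))
        = UE c (τ j) * (UE c (τ i) * (UE c (τ i) * (UK' c i * (UK' c i * UK' c j))))
        - (v+v⁻¹) • (UE c (τ i) * (UE c (τ j) * (UE c (τ i) * (UK' c i * (UK' c i * UK' c j)))))
        + UE c (τ i) * (UE c (τ i) * (UE c (τ j) * (UK' c i * (UK' c i * UK' c j)))) := by abel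
    exact sub_eq_zero.mp (h2.trans hSEM)
  -- main computation
  simp only [iB]
  simp only [mul_add, add_mul, smul_add, smul_sub, mul_assoc]
  simp only [ext hKx, ext hKy, ext hKf, ext hLx, ext hLe, ext1 hKe, ext1 hLK,
    ext1 hex, ext1 hey, ext1 hfx, hKx, hKy, hKf, hLx, hLe, hKe, hLK, hex, hey, hfx,
    smul_mul_assoc, mul_smul_comm, smul_smul, mul_assoc]
  rw [hSF', hSE']
  generalize (v : kk) ^ (-c i (τ j)) = u
  letI : Algebra ℕ kk := Semiring.toNatAlgebra
  letI : Algebra ℤ kk := Ring.toIntAlgebra _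
  match_scalars
  all_goals try ring
  all_goals (field_simp [hv_ne]; try ring)
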